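/- Convexity of the computing-time function for marginal-likelihood estimation (Lemma 4(i)): For constants a ≥ 0, b > 0 and v > 0, the function f(x) = (a + b/x)((v+1)e^x − 1) is strictly convex on (0, ∞); consequently it has at most one minimizer, so the minimizing value σ²_min(v) is unique. -/

import Mathlib

open Set

/-- **Convexity of the computing-time function for marginal-likelihood estimation**
(Lemma 4(i)).  For constants `a ≥ 0`, `b > 0` and `v > 0`, the function
`f(x) = (a + b/x)((v+1)e^x − 1)` is strictly convex on `(0, ∞)`; consequently it has at
most one minimizer on `(0, ∞)`, i.e. the minimizing value `σ²_min(v)` is unique. -/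
theorem marginal_likelihood_computing_time_strict_convex
    (a b v : ℝ) (ha : 0 ≤ a) (hb : 0 < b) (hv : 0 < v)
    (f : ℝ → ℝ) (hf : ∀ x, f x = (a + b / x) * ((v + 1) * Real.exp x - 1)) :
    StrictConvexOn ℝ (Ioi (0 : ℝ)) f ∧
    (∀ x₁ ∈ Ioi (0 : ℝ), ∀ x₂ ∈ Ioi (0 : ℝ),
      IsMinOn f (Ioi (0 : ℝ)) x₁ → IsMinOn f (Ioi (0 : ℝ)) x₂ → x₁ = x₂) := by
  have hfe : f = fun x => (a + b / x) * ((v + 1) * Real.exp x - 1) := funext hf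
  set c : ℝ := v + 1 with hcdef
  have hc1 : (1 : ℝ) < c := by simp only [hcdef]; linarith
  -- the first and second derivative candidates
  set f1 : ℝ → ℝ := fun x =>
    -(b / x ^ 2) * (c * Real.exp x - 1) + (a + b / x) * (c * Real.exp x) with hf1def
  set f2 : ℝ → ℝ := fun x =>
    (2 * b / x ^ 3 * (c * Real.exp x - 1) + -(b / x ^ 2) * (c * Real.exp x)) +
      (-(b / x ^ 2) * (c * Real.exp x) + (a + b / x) * (c * Real.exp x)) with hf2def
  have h1fun : ∀ x : ℝ, x ≠ 0 → HasDerivAt (fun y : ℝ => a + b / y) (-(b / x ^ 2)) x := by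
    intro x hx
    have h := ((hasDerivAt_inv hx).const_mul b).const_add a
    simp only [div_eq_mul_inv]
    convert h using 1
    case e'_4 => rfl
    case e'_5 => rfl
    case e'_9 => ring
  have h2fun : ∀ x : ℝ, HasDerivAt (fun y : ℝ => c * Real.exp y - 1) (c * Real.exp x) x := by
    intro x
    exact ((Real.hasDerivAt_exp x).const_mul c).sub_const 1
  have hd1 : ∀ x : ℝ, x ≠ 0 → HasDerivAt f (f1 x) x := by
    intro x hx
    rw [hfe]
    exact (h1fun x hx).mul (h2fun x)
  have hd2 : ∀ x : ℝ, x ≠ 0 → HasDerivAt f1 (f2 x) x := by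
    intro x hx
    have hA : HasDerivAt (fun y : ℝ => -(b / y ^ 2)) (2 * b / x ^ 3) x := by
      have h := (((hasDerivAt_pow 2 x).inv (pow_ne_zero 2 hx)).const_mul b).neg
      simp only [div_eq_mul_inv]
      convert h using 1
      case e'_4 => rfl
      case e'_5 => rfl
      case e'_8 => funext y; simp [Pi.inv_apply]
      field_simp
      ring
    have hB : HasDerivAt (fun y : ℝ => c * Real.exp y) (c * Real.exp x) x :=
      (Real.hasDerivAt_exp x).const_mul c
    exact (hA.mul (h2fun x)).add ((h1fun x hx).mul hB)
  -- positivity of the second derivative on (0, ∞)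
  have hpos : ∀ x : ℝ, 0 < x → 0 < f2 x := by
    intro x hx
    have hexp : 0 < Real.exp x := Real.exp_pos x
    have hq : 1 + x + x ^ 2 / 2 ≤ Real.exp x := Real.quadratic_le_exp_of_nonneg hx.le
    have key : 0 < c * Real.exp x * (x ^ 2 - 2 * x + 2) - 2 := by
      have hq2 : (0 : ℝ) < x ^ 2 - 2 * x + 2 := by nlinarith [sq_nonneg (x - 1)]
      have h5 : (1 + x + x ^ 2 / 2) * (x ^ 2 - 2 * x + 2) ≤
          Real.exp x * (x ^ 2 - 2 * x + 2) :=
        mul_le_mul_of_nonneg_right hq hq2.le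
      have h7 : 0 < Real.exp x * (x ^ 2 - 2 * x + 2) := mul_pos hexp hq2
      have h6 : Real.exp x * (x ^ 2 - 2 * x + 2) <
          c * (Real.exp x * (x ^ 2 - 2 * x + 2)) := by
        nlinarith
      have h8 : (1 + x + x ^ 2 / 2) * (x ^ 2 - 2 * x + 2) = 2 + x ^ 4 / 2 := by ring
      have h9 : (0 : ℝ) ≤ x ^ 4 := by positivity
      nlinarith
    have hx3 : 0 < x ^ 3 := by positivity
    have heq : f2 x =
        a * (c * Real.exp x) + (b / x ^ 3) * (c * Real.exp x * (x ^ 2 - 2 * x + 2) - 2) := by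
      simp only [hf2def]
      field_simp
      ring
    rw [heq]
    have h1 : 0 ≤ a * (c * Real.exp x) := by positivity
    have h2 : 0 < (b / x ^ 3) * (c * Real.exp x * (x ^ 2 - 2 * x + 2) - 2) :=
      mul_pos (by positivity) key
    exact add_pos_of_nonneg_of_pos h1 h2
  -- strict convexity via second derivative
  have hconv : StrictConvexOn ℝ (Ioi (0 : ℝ)) f := by
    apply strictConvexOn_of_deriv2_pos (convex_Ioi 0)
    · rw [hfe]
      apply ContinuousOn.mul
      · exact continuousOn_const.add (continuousOn_const.div continuousOn_id
          (fun x hx => ne_of_gt hx))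
      · exact (continuousOn_const.mul Real.continuousOn_exp).sub continuousOn_const
    · intro x hx
      rw [interior_Ioi] at hx
      have hx0 : (0 : ℝ) < x := hx
      have hEq : deriv f =ᶠ[nhds x] f1 := by
        filter_upwards [isOpen_Ioi.mem_nhds hx] with y hy
        exact (hd1 y (ne_of_gt hy)).deriv
      have : deriv (deriv f) x = f2 x := by
        rw [hEq.deriv_eq]
        exact (hd2 x (ne_of_gt hx0)).deriv
      simpa [Function.iterate_succ, this] using (this ▸ hpos x hx0)
  refine ⟨hconv, fun x₁ hx₁ x₂ hx₂ hm₁ hm₂ => hconv.eq_of_isMinOn hm₁ hm₂ hx₁ hx₂⟩
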